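/- arXiv:2605.01136 — 2 statements merged into one kernel-verified Lean document; each statement's English description precedes it below -/
import Mathlib

section
/- Let p(x) = Σ_{r=0}^{d} a_r x^r be a real polynomial, and let L, L̃ be symmetric positive semidefinite n×n matrices with (1-ε)L ⪯ L̃ ⪯ (1+ε)L, 0 < ε < 1, and operator norms of both L and L̃ at most B_L. Then ‖p(L) - p(L̃)‖ ≤ (Σ_{r=1}^{d} |a_r| · r · B_L^r) · ε, where ‖·‖ is the operator norm. -/
open Matrix BigOperators Finset
open scoped RealInnerProductSpace

noncomputable def frobNorm {m n : ℕ} (A : Matrix (Fin m) (Fin n) ℝ) : ℝ :=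
  Real.sqrt (∑ i, ∑ j, (A i j)^2)

noncomputable def opNorm {m n : ℕ} (A : Matrix (Fin m) (Fin n) ℝ) : ℝ :=
  ‖LinearMap.toContinuousLinearMap (Matrix.toEuclideanLin A)‖

noncomputable def tc {n : ℕ} (A : Matrix (Fin n) (Fin n) ℝ) :
    EuclideanSpace ℝ (Fin n) →L[ℝ] EuclideanSpace ℝ (Fin n) :=
  LinearMap.toContinuousLinearMap (Matrix.toEuclideanLin A)

lemma opNorm_eq_tc {n : ℕ} (A : Matrix (Fin n) (Fin n) ℝ) : opNorm A = ‖tc A‖ := rfl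

lemma tc_apply {n : ℕ} (A : Matrix (Fin n) (Fin n) ℝ) (x : EuclideanSpace ℝ (Fin n)) :
    tc A x = Matrix.toEuclideanLin A x := rfl

lemma tc_mul {n : ℕ} (A B : Matrix (Fin n) (Fin n) ℝ) : tc (A * B) = tc A * tc B := by
  ext x
  simp [tc_apply, toEuclideanLin_apply, mulVec_mulVec, ContinuousLinearMap.mul_apply]

lemma tc_sub {n : ℕ} (A B : Matrix (Fin n) (Fin n) ℝ) : tc (A - B) = tc A - tc B := by
  unfold tc; rw [map_sub, map_sub]

lemma tc_smul {n : ℕ} (c : ℝ) (A : Matrix (Fin n) (Fin n) ℝ) : tc (c • A) = c • tc A := by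
  unfold tc; rw [_root_.map_smul, _root_.map_smul]

lemma norm_le_of_sym {E : Type*} [NormedAddCommGroup E] [InnerProductSpace ℝ E]
    (T : E →L[ℝ] E) (hsym : ∀ u v : E, ⟪T u, v⟫ = ⟪u, T v⟫) {M : ℝ} (hM : 0 ≤ M)
    (h : ∀ x : E, |⟪T x, x⟫| ≤ M * ‖x‖ ^ 2) : ‖T‖ ≤ M := by
  apply ContinuousLinearMap.opNorm_le_bound T hM
  intro x
  by_cases hTx : T x = 0
  · rw [hTx, norm_zero]
    positivity
  have hx : x ≠ 0 := by rintro rfl; simp at hTx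
  have hxn : (0:ℝ) < ‖x‖ := norm_pos_iff.mpr hx
  have hTxn : (0:ℝ) < ‖T x‖ := norm_pos_iff.mpr hTx
  set y : E := (‖x‖ / ‖T x‖) • T x with hy
  have hyn : ‖y‖ = ‖x‖ := by
    rw [hy, norm_smul, Real.norm_eq_abs, abs_of_nonneg (by positivity), div_mul_cancel₀]
    exact hTxn.ne'
  have hinner : ⟪T x, y⟫ = ‖x‖ * ‖T x‖ := by
    rw [hy, real_inner_smul_right, real_inner_self_eq_norm_sq]
    field_simp
  have key : 4 * (‖x‖ * ‖T x‖) = ⟪T (x + y), x + y⟫ - ⟪T (x - y), x - y⟫ := by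
    have h1 : ⟪T y, x⟫ = ⟪T x, y⟫ := by
      rw [hsym y x, real_inner_comm]
    simp only [map_add, map_sub, inner_add_left, inner_add_right, inner_sub_left,
      inner_sub_right, h1, hinner]
    ring
  have hb : 4 * (‖x‖ * ‖T x‖) ≤ 4 * (M * ‖x‖ ^ 2) := by
    rw [key]
    have h2 := h (x + y)
    have h3 := h (x - y)
    have hpar := parallelogram_law_with_norm ℝ x y
    have hq : ‖x + y‖ ^ 2 + ‖x - y‖ ^ 2 = 4 * ‖x‖ ^ 2 := by rw [hpar, hyn]; ring
    have e : M * ‖x + y‖ ^ 2 + M * ‖x - y‖ ^ 2 = 4 * (M * ‖x‖ ^ 2) := by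
      calc M * ‖x + y‖ ^ 2 + M * ‖x - y‖ ^ 2 = M * (‖x + y‖ ^ 2 + ‖x - y‖ ^ 2) := by ring
        _ = M * (4 * ‖x‖ ^ 2) := by rw [hq]
        _ = 4 * (M * ‖x‖ ^ 2) := by ring
    linarith [(abs_le.mp h2).2, (abs_le.mp h3).1]
  have := le_of_mul_le_mul_left (by nlinarith : ‖x‖ * ‖T x‖ ≤ ‖x‖ * (M * ‖x‖)) hxn
  linarith

lemma tc_sym {n : ℕ} {A : Matrix (Fin n) (Fin n) ℝ} (hA : A.IsHermitian) (u v : EuclideanSpace ℝ (Fin n)) :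
    ⟪tc A u, v⟫ = ⟪u, tc A v⟫ := by
  have := (Matrix.isHermitian_iff_isSymmetric).mp hA
  exact this u v

lemma tc_inner_nonneg {n : ℕ} {A : Matrix (Fin n) (Fin n) ℝ} (hA : A.PosSemidef)
    (x : EuclideanSpace ℝ (Fin n)) : 0 ≤ ⟪tc A x, x⟫ := by
  have h := hA.dotProduct_mulVec_nonneg (WithLp.equiv 2 (Fin n → ℝ) x)
  simp only [star_trivial, dotProduct] at h
  simp only [tc_apply, toEuclideanLin_apply, PiLp.inner_apply, RCLike.inner_apply,
    conj_trivial]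
  calc (0:ℝ) ≤ ∑ i, (WithLp.equiv 2 (Fin n → ℝ) x) i * (A *ᵥ (WithLp.equiv 2 (Fin n → ℝ) x)) i := h
    _ = ∑ i, (A *ᵥ (WithLp.equiv 2 (Fin n → ℝ) x)) i * (WithLp.equiv 2 (Fin n → ℝ) x) i := by
        simp [mul_comm]
    _ = ∑ i, x.ofLp i * (A *ᵥ x.ofLp) i := by simp [mul_comm]

lemma opNorm_nonneg' {n : ℕ} (A : Matrix (Fin n) (Fin n) ℝ) : 0 ≤ opNorm A := norm_nonneg _

lemma opNorm_mul_le' {n : ℕ} (A B : Matrix (Fin n) (Fin n) ℝ) :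
    opNorm (A * B) ≤ opNorm A * opNorm B := by
  rw [opNorm_eq_tc, opNorm_eq_tc, opNorm_eq_tc, tc_mul]
  exact norm_mul_le _ _

lemma opNorm_add_le' {n : ℕ} (A B : Matrix (Fin n) (Fin n) ℝ) :
    opNorm (A + B) ≤ opNorm A + opNorm B := by
  rw [opNorm_eq_tc, opNorm_eq_tc, opNorm_eq_tc]
  have : tc (A + B) = tc A + tc B := by unfold tc; rw [map_add, map_add]
  rw [this]; exact norm_add_le _ _

lemma opNorm_smul' {n : ℕ} (c : ℝ) (A : Matrix (Fin n) (Fin n) ℝ) :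
    opNorm (c • A) = |c| * opNorm A := by
  rw [opNorm_eq_tc, opNorm_eq_tc, tc_smul]
  rw [norm_smul c (tc A), Real.norm_eq_abs]

lemma opNorm_one_le {n : ℕ} : opNorm (1 : Matrix (Fin n) (Fin n) ℝ) ≤ 1 := by
  rw [opNorm_eq_tc]
  have : tc (1 : Matrix (Fin n) (Fin n) ℝ) = 1 := by
    ext x
    simp [tc_apply, toEuclideanLin_apply, Matrix.one_mulVec]
  rw [this]
  exact ContinuousLinearMap.norm_id_le

lemma opNorm_pow_le {n : ℕ} {A : Matrix (Fin n) (Fin n) ℝ} {B : ℝ}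
    (hA : opNorm A ≤ B) (hB : 0 ≤ B) (r : ℕ) : opNorm (A ^ r) ≤ B ^ r := by
  induction r with
  | zero => simpa using opNorm_one_le
  | succ r ih =>
      calc opNorm (A ^ (r + 1)) = opNorm (A * A ^ r) := by rw [pow_succ']
        _ ≤ opNorm A * opNorm (A ^ r) := opNorm_mul_le' _ _
        _ ≤ B * B ^ r := by
            exact mul_le_mul hA ih (opNorm_nonneg' _) hB
        _ = B ^ (r + 1) := by rw [pow_succ']

lemma opNorm_sum_le' {n : ℕ} {ι : Type*} (s : Finset ι) (f : ι → Matrix (Fin n) (Fin n) ℝ) :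
    opNorm (∑ i ∈ s, f i) ≤ ∑ i ∈ s, opNorm (f i) := by
  have : tc (∑ i ∈ s, f i) = ∑ i ∈ s, tc (f i) := by unfold tc; rw [map_sum, map_sum]
  rw [opNorm_eq_tc, this]
  exact norm_sum_le _ _

lemma sandwich_opNorm {n : ℕ} {L Lt : Matrix (Fin n) (Fin n) ℝ} {ε B_L : ℝ}
    (hε : 0 < ε)
    (hL : L.PosSemidef) (hLt : Lt.PosSemidef)
    (hlow : (Lt - (1 - ε) • L).PosSemidef)
    (hupp : ((1 + ε) • L - Lt).PosSemidef)
    (hBL : opNorm L ≤ B_L) :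
    opNorm (L - Lt) ≤ ε * B_L := by
  have hB0 : 0 ≤ B_L := le_trans (opNorm_nonneg' L) hBL
  rw [opNorm_eq_tc]
  apply norm_le_of_sym _ (tc_sym (hL.1.sub hLt.1)) (by positivity)
  intro x
  have hsubs : tc (L - Lt) x = tc L x - tc Lt x := by rw [tc_sub]; rfl
  have ha : ⟪tc (L - Lt) x, x⟫ = ⟪tc L x, x⟫ - ⟪tc Lt x, x⟫ := by
    rw [hsubs, inner_sub_left]
  have h1 : 0 ≤ ⟪tc Lt x, x⟫ - (1 - ε) * ⟪tc L x, x⟫ := by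
    have := tc_inner_nonneg hlow x
    have e : tc (Lt - (1 - ε) • L) x = tc Lt x - (1 - ε) • tc L x := by
      rw [tc_sub, tc_smul]; rfl
    rw [e, inner_sub_left, real_inner_smul_left] at this
    linarith
  have h2 : 0 ≤ (1 + ε) * ⟪tc L x, x⟫ - ⟪tc Lt x, x⟫ := by
    have := tc_inner_nonneg hupp x
    have e : tc ((1 + ε) • L - Lt) x = (1 + ε) • tc L x - tc Lt x := by
      rw [tc_sub, tc_smul]; rfl
    rw [e, inner_sub_left, real_inner_smul_left] at this
    linarith
  have hLx : ⟪tc L x, x⟫ ≤ opNorm L * ‖x‖ ^ 2 := by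
    calc ⟪tc L x, x⟫ ≤ ‖tc L x‖ * ‖x‖ := real_inner_le_norm _ _
      _ ≤ ‖tc L‖ * ‖x‖ * ‖x‖ :=
          mul_le_mul_of_nonneg_right ((tc L).le_opNorm x) (norm_nonneg _)
      _ = opNorm L * ‖x‖ ^ 2 := by rw [opNorm_eq_tc]; ring
  have hLnn : 0 ≤ ⟪tc L x, x⟫ := tc_inner_nonneg hL x
  rw [ha]
  rw [abs_le]
  constructor
  · nlinarith [sq_nonneg ‖x‖, mul_le_mul_of_nonneg_left hLx hε.le,
      mul_le_mul_of_nonneg_left (mul_le_mul_of_nonneg_right hBL (sq_nonneg ‖x‖)) hε.le]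
  · nlinarith [sq_nonneg ‖x‖, mul_le_mul_of_nonneg_left hLx hε.le,
      mul_le_mul_of_nonneg_left (mul_le_mul_of_nonneg_right hBL (sq_nonneg ‖x‖)) hε.le]

lemma opNorm_pow_sub_le' {n : ℕ} {L Lt : Matrix (Fin n) (Fin n) ℝ} {ε B_L : ℝ}
    (hδ : opNorm (L - Lt) ≤ ε * B_L) (hε0 : 0 ≤ ε)
    (hBL : opNorm L ≤ B_L) (hBLt : opNorm Lt ≤ B_L) (hB0 : 0 ≤ B_L) (r : ℕ) :
    opNorm (L ^ r - Lt ^ r) ≤ r * B_L ^ r * ε := by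
  induction r with
  | zero =>
      simp only [pow_zero, sub_self, Nat.cast_zero, zero_mul]
      have : tc (0 : Matrix (Fin n) (Fin n) ℝ) = 0 := by unfold tc; rw [map_zero, map_zero]
      rw [opNorm_eq_tc, this, norm_zero]
  | succ r ih =>
      have hdecomp : L ^ (r + 1) - Lt ^ (r + 1) = L * (L ^ r - Lt ^ r) + (L - Lt) * Lt ^ r := by
        rw [pow_succ', pow_succ', mul_sub, sub_mul]
        abel
      have h1 : opNorm (L * (L ^ r - Lt ^ r)) ≤ B_L * (r * B_L ^ r * ε) := by
        calc opNorm (L * (L ^ r - Lt ^ r)) ≤ opNorm L * opNorm (L ^ r - Lt ^ r) :=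
              opNorm_mul_le' _ _
          _ ≤ B_L * (r * B_L ^ r * ε) :=
              mul_le_mul hBL ih (opNorm_nonneg' _) hB0
      have h2 : opNorm ((L - Lt) * Lt ^ r) ≤ (ε * B_L) * B_L ^ r := by
        calc opNorm ((L - Lt) * Lt ^ r) ≤ opNorm (L - Lt) * opNorm (Lt ^ r) :=
              opNorm_mul_le' _ _
          _ ≤ (ε * B_L) * B_L ^ r :=
              mul_le_mul hδ (opNorm_pow_le hBLt hB0 r) (opNorm_nonneg' _) (by positivity)
      calc opNorm (L ^ (r + 1) - Lt ^ (r + 1))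
          ≤ opNorm (L * (L ^ r - Lt ^ r)) + opNorm ((L - Lt) * Lt ^ r) := by
            rw [hdecomp]; exact opNorm_add_le' _ _
        _ ≤ B_L * (r * B_L ^ r * ε) + (ε * B_L) * B_L ^ r := add_le_add h1 h2
        _ = (r + 1 : ℕ) * B_L ^ (r + 1) * ε := by
            push_cast
            ring

theorem poly_filter_stability {n : ℕ} (d : ℕ) (a : ℕ → ℝ)
    (L Lt : Matrix (Fin n) (Fin n) ℝ) (ε B_L : ℝ)
    (hε : 0 < ε) (hε1 : ε < 1)
    (hL : L.PosSemidef) (hLt : Lt.PosSemidef)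
    (hlow : (Lt - (1 - ε) • L).PosSemidef)
    (hupp : ((1 + ε) • L - Lt).PosSemidef)
    (hBL : opNorm L ≤ B_L) (hBLt : opNorm Lt ≤ B_L) :
    opNorm ((∑ r ∈ Finset.range (d + 1), a r • L ^ r) -
        ∑ r ∈ Finset.range (d + 1), a r • Lt ^ r) ≤
      (∑ r ∈ Finset.Icc 1 d, |a r| * r * B_L ^ r) * ε := by
  have hB0 : 0 ≤ B_L := le_trans (opNorm_nonneg' L) hBL
  have hδ : opNorm (L - Lt) ≤ ε * B_L := sandwich_opNorm hε hL hLt hlow hupp hBL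
  have hsum : (∑ r ∈ Finset.range (d + 1), a r • L ^ r) -
      ∑ r ∈ Finset.range (d + 1), a r • Lt ^ r =
      ∑ r ∈ Finset.range (d + 1), a r • (L ^ r - Lt ^ r) := by
    rw [← Finset.sum_sub_distrib]
    exact Finset.sum_congr rfl fun r _ => (smul_sub _ _ _).symm
  rw [hsum]
  calc opNorm (∑ r ∈ Finset.range (d + 1), a r • (L ^ r - Lt ^ r))
      ≤ ∑ r ∈ Finset.range (d + 1), opNorm (a r • (L ^ r - Lt ^ r)) :=
        opNorm_sum_le' _ _
    _ ≤ ∑ r ∈ Finset.range (d + 1), |a r| * (r * B_L ^ r * ε) := by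
        apply Finset.sum_le_sum
        intro r _
        rw [opNorm_smul']
        exact mul_le_mul_of_nonneg_left
          (opNorm_pow_sub_le' hδ hε.le hBL hBLt hB0 r) (abs_nonneg _)
    _ = ∑ r ∈ Finset.Icc 1 d, |a r| * (r * B_L ^ r * ε) := by
        symm
        apply Finset.sum_subset
        · intro r hr
          simp only [Finset.mem_Icc] at hr
          simp only [Finset.mem_range]
          omega
        · intro r hr hnot
          simp only [Finset.mem_range] at hr
          simp only [Finset.mem_Icc] at hnot
          have : r = 0 := by omega
          simp [this]
    _ = (∑ r ∈ Finset.Icc 1 d, |a r| * r * B_L ^ r) * ε := by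
        rw [Finset.sum_mul]
        exact Finset.sum_congr rfl fun r _ => by ring
end

section
/- Let Z, Z̃ be n×d real matrices with rows z_i, z̃_i whose Euclidean norms are all at most B. Let S ⊆ {1,...,n} with |S| = m ≥ 1, define μ = (1/m)Σ_{i∈S} z_i, Σ_c = (1/m)Σ_{i∈S}(z_i-μ)(z_i-μ)ᵀ, and analogously μ̃, Σ̃_c from Z̃. Then the operator norm of Σ_c - Σ̃_c is at most (8B/√m)·‖Z - Z̃‖_F. -/
open Matrix BigOperators Finset

noncomputable abbrev evmap (d : ℕ) : (Fin d → ℝ) ≃ₗ[ℝ] EuclideanSpace ℝ (Fin d) :=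
  (WithLp.linearEquiv 2 ℝ (Fin d → ℝ)).symm

lemma evmap_norm {d : ℕ} (w : Fin d → ℝ) :
    ‖evmap d w‖ = Real.sqrt (∑ k, (w k)^2) := by
  rw [EuclideanSpace.norm_eq]
  congr 1
  refine Finset.sum_congr rfl fun k _ => ?_
  simp [Real.norm_eq_abs, sq_abs]

lemma evmap_dot {d : ℕ} (w : Fin d → ℝ) (v : EuclideanSpace ℝ (Fin d)) :
    w ⬝ᵥ (WithLp.equiv 2 (Fin d → ℝ) v) = inner ℝ (evmap d w) v := by
  simp [PiLp.inner_apply, RCLike.inner_apply, dotProduct, mul_comm]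

lemma key_mulVec {n d : ℕ} (m : ℕ) (S : Finset (Fin n)) (A At : Fin n → Fin d → ℝ)
    (Sc Sct : Matrix (Fin d) (Fin d) ℝ)
    (hSc : ∀ a b, Sc a b = (1 / (m : ℝ)) * ∑ i ∈ S, A i a * A i b)
    (hSt : ∀ a b, Sct a b = (1 / (m : ℝ)) * ∑ i ∈ S, At i a * At i b)
    (y : Fin d → ℝ) :
    (Sc - Sct) *ᵥ y
      = (m : ℝ)⁻¹ • ∑ i ∈ S, ((A i ⬝ᵥ y) • A i - (At i ⬝ᵥ y) • At i) := by
  funext j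
  simp only [Matrix.mulVec, dotProduct, Matrix.sub_apply, hSc, hSt, Pi.smul_apply,
    Finset.sum_apply, Pi.sub_apply, smul_eq_mul, one_div]
  calc ∑ x, (((m:ℝ)⁻¹ * ∑ i ∈ S, A i j * A i x - (m:ℝ)⁻¹ * ∑ i ∈ S, At i j * At i x) * y x)
      = ∑ x, ∑ i ∈ S, (m:ℝ)⁻¹ * (A i j * A i x * y x - At i j * At i x * y x) := by
        refine Finset.sum_congr rfl fun x _ => ?_
        rw [← Finset.mul_sum, Finset.sum_sub_distrib, ← Finset.sum_mul, ← Finset.sum_mul]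
        ring
    _ = ∑ i ∈ S, ∑ x, (m:ℝ)⁻¹ * (A i j * A i x * y x - At i j * At i x * y x) :=
        Finset.sum_comm
    _ = ∑ i ∈ S, (m:ℝ)⁻¹ * ((∑ x, A i x * y x) * A i j - (∑ x, At i x * y x) * At i j) := by
        refine Finset.sum_congr rfl fun i _ => ?_
        rw [← Finset.mul_sum]
        congr 1
        rw [Finset.sum_sub_distrib]
        congr 1 <;> (rw [Finset.sum_mul]; exact Finset.sum_congr rfl fun x _ => by ring)
    _ = (m:ℝ)⁻¹ * ∑ i ∈ S, ((∑ x, A i x * y x) * A i j - (∑ x, At i x * y x) * At i j) := by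
        rw [Finset.mul_sum]

set_option maxHeartbeats 1000000 in
theorem class_covariance_stability {n d : ℕ} (Z Zt : Matrix (Fin n) (Fin d) ℝ)
    (B : ℝ)
    (hZ : ∀ i, Real.sqrt (∑ k, (Z i k)^2) ≤ B)
    (hZt : ∀ i, Real.sqrt (∑ k, (Zt i k)^2) ≤ B)
    (S : Finset (Fin n)) (m : ℕ) (hm : S.card = m) (hm1 : 1 ≤ m)
    (μ μt : Fin d → ℝ)
    (hμ : ∀ k, μ k = (1 / (m : ℝ)) * ∑ i ∈ S, Z i k)
    (hμt : ∀ k, μt k = (1 / (m : ℝ)) * ∑ i ∈ S, Zt i k)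
    (Sc Sct : Matrix (Fin d) (Fin d) ℝ)
    (hSc : ∀ a b, Sc a b = (1 / (m : ℝ)) * ∑ i ∈ S, (Z i a - μ a) * (Z i b - μ b))
    (hSt : ∀ a b, Sct a b = (1 / (m : ℝ)) * ∑ i ∈ S, (Zt i a - μt a) * (Zt i b - μt b)) :
    opNorm (Sc - Sct) ≤ (8 * B / Real.sqrt m) * frobNorm (Z - Zt) := by
  classical
  obtain ⟨i0, hi0⟩ : S.Nonempty := Finset.card_pos.mp (by omega)
  have hm0 : (0:ℝ) < m := by exact_mod_cast hm1
  have hsm : (0:ℝ) < Real.sqrt m := Real.sqrt_pos.mpr hm0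
  have hmm : Real.sqrt m * Real.sqrt m = (m:ℝ) := Real.mul_self_sqrt hm0.le
  have hB : 0 ≤ B := le_trans (Real.sqrt_nonneg _) (hZ i0)
  set F := frobNorm (Z - Zt) with hFdef
  have hF0 : 0 ≤ F := Real.sqrt_nonneg _
  set ev := evmap d with hev
  set A : Fin n → Fin d → ℝ := fun i k => Z i k - μ k with hA
  set At : Fin n → Fin d → ℝ := fun i k => Zt i k - μt k with hAt
  -- norms of rows
  have hZn : ∀ i, ‖ev (Z i)‖ ≤ B := fun i => by rw [evmap_norm]; exact hZ i
  have hZtn : ∀ i, ‖ev (Zt i)‖ ≤ B := fun i => by rw [evmap_norm]; exact hZt i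
  -- mean as average
  have hμv : ev μ = (m:ℝ)⁻¹ • ∑ i ∈ S, ev (Z i) := by
    rw [(map_sum ev (fun i => Z i) S).symm, ← _root_.map_smul]
    congr 1
    funext k
    simp [hμ k, Finset.sum_apply, one_div]
    exact Or.inl (Finset.sum_apply k S (fun i => Z i)).symm
  have hμtv : ev μt = (m:ℝ)⁻¹ • ∑ i ∈ S, ev (Zt i) := by
    rw [(map_sum ev (fun i => Zt i) S).symm, ← _root_.map_smul]
    congr 1
    funext k
    simp [hμt k, Finset.sum_apply, one_div]
    exact Or.inl (Finset.sum_apply k S (fun i => Zt i)).symm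
  have havg_le : ∀ (v : Fin n → EuclideanSpace ℝ (Fin d)) (C : ℝ),
      (∀ i ∈ S, ‖v i‖ ≤ C) → ‖(m:ℝ)⁻¹ • ∑ i ∈ S, v i‖ ≤ C := by
    intro v C hv
    rw [norm_smul]
    have h1 : ‖∑ i ∈ S, v i‖ ≤ (m:ℝ) * C := by
      calc ‖∑ i ∈ S, v i‖ ≤ ∑ i ∈ S, ‖v i‖ := norm_sum_le _ _
        _ ≤ ∑ _i ∈ S, C := Finset.sum_le_sum hv
        _ = (m:ℝ) * C := by rw [Finset.sum_const, hm]; simp [nsmul_eq_mul]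
    calc ‖(m:ℝ)⁻¹‖ * ‖∑ i ∈ S, v i‖ = (m:ℝ)⁻¹ * ‖∑ i ∈ S, v i‖ := by
          rw [Real.norm_eq_abs, abs_of_pos (by positivity)]
      _ ≤ (m:ℝ)⁻¹ * ((m:ℝ) * C) := by
          have := mul_le_mul_of_nonneg_left h1 (le_of_lt (by positivity : (0:ℝ) < (m:ℝ)⁻¹))
          linarith
      _ = C := by field_simp
  have hμn : ‖ev μ‖ ≤ B := by rw [hμv]; exact havg_le _ _ fun i _ => hZn i
  have hμtn : ‖ev μt‖ ≤ B := by rw [hμtv]; exact havg_le _ _ fun i _ => hZtn i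
  -- centered vectors
  have haev : ∀ i, ev (A i) = ev (Z i) - ev μ := fun i => by
    rw [← map_sub]; rfl
  have hatev : ∀ i, ev (At i) = ev (Zt i) - ev μt := fun i => by
    rw [← map_sub]; rfl
  have haB : ∀ i ∈ S, ‖ev (A i)‖ ≤ 2 * B := by
    intro i _
    rw [haev i]
    calc ‖ev (Z i) - ev μ‖ ≤ ‖ev (Z i)‖ + ‖ev μ‖ := norm_sub_le _ _
      _ ≤ 2 * B := by linarith [hZn i, hμn]
  have hatB : ∀ i ∈ S, ‖ev (At i)‖ ≤ 2 * B := by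
    intro i _
    rw [hatev i]
    calc ‖ev (Zt i) - ev μt‖ ≤ ‖ev (Zt i)‖ + ‖ev μt‖ := norm_sub_le _ _
      _ ≤ 2 * B := by linarith [hZtn i, hμtn]
  -- row differences
  set Dv : Fin n → EuclideanSpace ℝ (Fin d) := fun i => ev (fun k => Z i k - Zt i k) with hDv
  have hDsq : ∀ i, ‖Dv i‖^2 = ∑ k, (Z i k - Zt i k)^2 := by
    intro i
    rw [hDv]
    simp only
    rw [evmap_norm, Real.sq_sqrt (by positivity)]
  have hDsum : ∑ i ∈ S, ‖Dv i‖ ≤ Real.sqrt m * F := by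
    have h1 : (∑ i ∈ S, ‖Dv i‖)^2 ≤ (m:ℝ) * ∑ i ∈ S, ‖Dv i‖^2 := by
      have := sq_sum_le_card_mul_sum_sq (s := S) (f := fun i => ‖Dv i‖)
      rw [hm] at this
      exact_mod_cast this
    have h2 : ∑ i ∈ S, ‖Dv i‖^2 ≤ F^2 := by
      rw [hFdef, frobNorm, Real.sq_sqrt (by positivity)]
      calc ∑ i ∈ S, ‖Dv i‖^2 = ∑ i ∈ S, ∑ k, (Z i k - Zt i k)^2 := by
            exact Finset.sum_congr rfl fun i _ => hDsq i
        _ ≤ ∑ i, ∑ k, (Z i k - Zt i k)^2 :=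
            Finset.sum_le_sum_of_subset_of_nonneg (Finset.subset_univ S)
              (fun i _ _ => by positivity)
        _ = ∑ i, ∑ j, ((Z - Zt) i j)^2 := by simp [Matrix.sub_apply]
    have h3 : (∑ i ∈ S, ‖Dv i‖)^2 ≤ (Real.sqrt m * F)^2 := by
      calc (∑ i ∈ S, ‖Dv i‖)^2 ≤ (m:ℝ) * ∑ i ∈ S, ‖Dv i‖^2 := h1
        _ ≤ (m:ℝ) * F^2 := by nlinarith
        _ = (Real.sqrt m * F)^2 := by rw [mul_pow, Real.sq_sqrt hm0.le]
    have h4 : 0 ≤ ∑ i ∈ S, ‖Dv i‖ := Finset.sum_nonneg fun i _ => norm_nonneg _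
    nlinarith [mul_nonneg hsm.le hF0]
  -- mean difference
  have hμdiff : ‖ev μ - ev μt‖ ≤ F / Real.sqrt m := by
    have heq : ev μ - ev μt = (m:ℝ)⁻¹ • ∑ i ∈ S, Dv i := by
      rw [hμv, hμtv, ← smul_sub, ← Finset.sum_sub_distrib]
      have hss : ∀ i ∈ S, ev (Z i) - ev (Zt i) = Dv i := fun i _ => (map_sub ev _ _).symm
      rw [Finset.sum_congr rfl hss]
    rw [heq, norm_smul, Real.norm_eq_abs, abs_of_pos (by positivity)]
    calc (m:ℝ)⁻¹ * ‖∑ i ∈ S, Dv i‖ ≤ (m:ℝ)⁻¹ * (Real.sqrt m * F) := by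
          have h5 : ‖∑ i ∈ S, Dv i‖ ≤ ∑ i ∈ S, ‖Dv i‖ := norm_sum_le _ _
          have : (0:ℝ) ≤ (m:ℝ)⁻¹ := by positivity
          nlinarith [hDsum]
      _ = F / Real.sqrt m := by
          field_simp
          linear_combination F * hmm
  -- sum of centered differences
  have hcd : ∀ i, ev (A i) - ev (At i) = Dv i - (ev μ - ev μt) := by
    intro i
    have hAA : A i - At i = (fun k => Z i k - Zt i k) - (μ - μt) := by
      funext k
      simp only [hA, hAt, Pi.sub_apply]
      ring
    calc ev (A i) - ev (At i) = ev (A i - At i) := (map_sub ev _ _).symm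
      _ = ev ((fun k => Z i k - Zt i k) - (μ - μt)) := by rw [hAA]
      _ = Dv i - (ev μ - ev μt) := by rw [map_sub, map_sub, hDv]
  -- bound on sum of centered differences
  have hsumcd : ∑ i ∈ S, ‖ev (A i) - ev (At i)‖ ≤ 2 * Real.sqrt m * F := by
    have hcdn : ∀ i ∈ S, ‖ev (A i) - ev (At i)‖ ≤ ‖Dv i‖ + F / Real.sqrt m := by
      intro i _
      rw [hcd i]
      calc ‖Dv i - (ev μ - ev μt)‖ ≤ ‖Dv i‖ + ‖ev μ - ev μt‖ := norm_sub_le _ _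
        _ ≤ ‖Dv i‖ + F / Real.sqrt m := by linarith [hμdiff]
    calc ∑ i ∈ S, ‖ev (A i) - ev (At i)‖ ≤ ∑ i ∈ S, (‖Dv i‖ + F / Real.sqrt m) :=
          Finset.sum_le_sum hcdn
      _ = (∑ i ∈ S, ‖Dv i‖) + (m:ℝ) * (F / Real.sqrt m) := by
          rw [Finset.sum_add_distrib, Finset.sum_const, hm, nsmul_eq_mul]
      _ ≤ Real.sqrt m * F + Real.sqrt m * F := by
          have h8 : (m:ℝ) * (F / Real.sqrt m) = Real.sqrt m * F := by
            field_simp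
            linear_combination (-F) * hmm
          rw [h8]
          linarith [hDsum]
      _ = 2 * Real.sqrt m * F := by ring
  -- main bound
  rw [opNorm]
  apply ContinuousLinearMap.opNorm_le_bound _
    (by positivity)
  intro x
  set x' : Fin d → ℝ := WithLp.equiv 2 (Fin d → ℝ) x with hx'
  have hmv := key_mulVec m S A At Sc Sct hSc hSt x'
  have happly : (LinearMap.toContinuousLinearMap (Matrix.toEuclideanLin (Sc - Sct))) x
      = ev ((Sc - Sct) *ᵥ x') := rfl
  have hmv2 : ev ((Sc - Sct) *ᵥ x')
      = (m:ℝ)⁻¹ • ∑ i ∈ S, ((A i ⬝ᵥ x') • ev (A i) - (At i ⬝ᵥ x') • ev (At i)) := by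
    rw [hmv, _root_.map_smul, map_sum]
    congr 1
  have hterm : ∀ i ∈ S, ‖(A i ⬝ᵥ x') • ev (A i) - (At i ⬝ᵥ x') • ev (At i)‖
      ≤ 4 * B * ‖x‖ * ‖ev (A i) - ev (At i)‖ := by
    intro i hi
    have hp : |A i ⬝ᵥ x'| ≤ 2 * B * ‖x‖ := by
      rw [hx', evmap_dot]
      calc |inner ℝ (evmap d (A i)) x| ≤ ‖evmap d (A i)‖ * ‖x‖ := abs_real_inner_le_norm _ _
        _ ≤ 2 * B * ‖x‖ := mul_le_mul_of_nonneg_right (haB i hi) (norm_nonneg x)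
    have hq : |A i ⬝ᵥ x' - At i ⬝ᵥ x'| ≤ ‖ev (A i) - ev (At i)‖ * ‖x‖ := by
      have h9 : A i ⬝ᵥ x' - At i ⬝ᵥ x' = (A i - At i) ⬝ᵥ x' := (sub_dotProduct _ _ _).symm
      have h10 : evmap d (A i - At i) = ev (A i) - ev (At i) := map_sub ev _ _
      rw [h9, hx', evmap_dot, h10]
      exact abs_real_inner_le_norm _ _
    have hdecomp : (A i ⬝ᵥ x') • ev (A i) - (At i ⬝ᵥ x') • ev (At i)
        = (A i ⬝ᵥ x') • (ev (A i) - ev (At i)) + (A i ⬝ᵥ x' - At i ⬝ᵥ x') • ev (At i) := by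
      rw [smul_sub, sub_smul]; abel
    rw [hdecomp]
    have hd0 : (0:ℝ) ≤ ‖ev (A i) - ev (At i)‖ := norm_nonneg _
    calc ‖(A i ⬝ᵥ x') • (ev (A i) - ev (At i)) + (A i ⬝ᵥ x' - At i ⬝ᵥ x') • ev (At i)‖
        ≤ ‖(A i ⬝ᵥ x') • (ev (A i) - ev (At i))‖ + ‖(A i ⬝ᵥ x' - At i ⬝ᵥ x') • ev (At i)‖ :=
          norm_add_le _ _
      _ ≤ (2 * B * ‖x‖) * ‖ev (A i) - ev (At i)‖ + (‖ev (A i) - ev (At i)‖ * ‖x‖) * (2 * B) := by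
          rw [norm_smul, norm_smul, Real.norm_eq_abs, Real.norm_eq_abs]
          have t1 := mul_le_mul_of_nonneg_right hp hd0
          have t2 := mul_le_mul hq (hatB i hi) (norm_nonneg _)
            (mul_nonneg hd0 (norm_nonneg x))
          linarith
      _ = 4 * B * ‖x‖ * ‖ev (A i) - ev (At i)‖ := by ring
  rw [happly, hmv2, norm_smul, Real.norm_eq_abs, abs_of_pos (by positivity)]
  have h4B : (0:ℝ) ≤ 4 * B * ‖x‖ := by positivity
  calc (m:ℝ)⁻¹ * ‖∑ i ∈ S, ((A i ⬝ᵥ x') • ev (A i) - (At i ⬝ᵥ x') • ev (At i))‖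
      ≤ (m:ℝ)⁻¹ * ∑ i ∈ S, ‖(A i ⬝ᵥ x') • ev (A i) - (At i ⬝ᵥ x') • ev (At i)‖ :=
        mul_le_mul_of_nonneg_left (norm_sum_le _ _) (by positivity)
    _ ≤ (m:ℝ)⁻¹ * ∑ i ∈ S, 4 * B * ‖x‖ * ‖ev (A i) - ev (At i)‖ := by
        gcongr with i hi
        exact hterm i hi
    _ = (m:ℝ)⁻¹ * (4 * B * ‖x‖) * ∑ i ∈ S, ‖ev (A i) - ev (At i)‖ := by
        rw [← Finset.mul_sum]; ring
    _ ≤ (m:ℝ)⁻¹ * (4 * B * ‖x‖) * (2 * Real.sqrt m * F) := by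
        have := mul_le_mul_of_nonneg_left hsumcd
          (mul_nonneg (by positivity : (0:ℝ) ≤ (m:ℝ)⁻¹) h4B)
        linarith
    _ = 8 * B / Real.sqrt m * F * ‖x‖ := by
        field_simp
        linear_combination 8 * B * F * ‖x‖ * hmm
end
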